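/- Let M be an additive abelian group, let B be a commutative ring with an M-grading B = ⊕_{m∈M} B_m, and let I ⊆ B be a homogeneous ideal such that I₀ := I ∩ B₀ is contained in the Jacobson radical of the subring B₀. If E is a finitely generated M-graded B-module with I·E = E (equivalently, E ⊗_B B/I = 0), then E = 0. -/

import Mathlib

open DirectSum

/-- Projection of `b • x` when `x` is homogeneous of degree `d`. -/
private lemma gn_decompose_smul
    {M : Type*} [AddCommGroup M] [DecidableEq M]
    {B : Type*} [CommRing B] (𝒜 : M → AddSubgroup B) [GradedRing 𝒜]
    {E : Type*} [AddCommGroup E] [Module B E]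
    (ℰ : M → AddSubgroup E) [SetLike.GradedSMul 𝒜 ℰ] [DirectSum.Decomposition ℰ]
    (b : B) {d : M} {x : E} (hx : x ∈ ℰ d) (m : M) :
    (DirectSum.decompose ℰ (b • x) m : E) = (DirectSum.decompose 𝒜 b (m - d) : B) • x := by
  classical
  have key : ∀ j : M, (DirectSum.decompose ℰ ((DirectSum.decompose 𝒜 b j : B) • x) m : E)
      = if j = m - d then (DirectSum.decompose 𝒜 b j : B) • x else 0 := by
    intro j
    have hmem : (DirectSum.decompose 𝒜 b j : B) • x ∈ ℰ (j + d) :=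
      SetLike.GradedSMul.smul_mem (DirectSum.decompose 𝒜 b j).2 hx
    by_cases h : j = m - d
    · subst h
      rw [if_pos rfl]
      exact DirectSum.decompose_of_mem_same ℰ (by rwa [sub_add_cancel] at hmem)
    · rw [if_neg h]
      exact DirectSum.decompose_of_mem_ne ℰ hmem (fun hc => h (eq_sub_of_add_eq hc))
  conv_lhs => rw [← DirectSum.sum_support_decompose 𝒜 b, Finset.sum_smul,
    DirectSum.decompose_sum]
  rw [DFinsupp.finset_sum_apply, AddSubmonoidClass.coe_finset_sum]
  rw [Finset.sum_congr rfl (fun j _ => key j), Finset.sum_ite_eq']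
  by_cases hmd : m - d ∈ (DirectSum.decompose 𝒜 b).support
  · rw [if_pos hmd]
  · rw [if_neg hmd]
    have : DirectSum.decompose 𝒜 b (m - d) = 0 := DFinsupp.notMem_support_iff.1 hmd
    rw [this]
    simp

private lemma gn_aux
    {M : Type*} [AddCommGroup M] [DecidableEq M]
    {B : Type*} [CommRing B] (𝒜 : M → AddSubgroup B) [GradedRing 𝒜]
    (I : Ideal B) (hI : Ideal.IsHomogeneous 𝒜 I)
    (hI0 : Ideal.comap ((SetLike.GradeZero.subring 𝒜).subtype : (𝒜 0) →+* B) I ≤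
      Ideal.jacobson (⊥ : Ideal (𝒜 0)))
    {E : Type*} [AddCommGroup E] [Module B E]
    (ℰ : M → AddSubgroup E) [SetLike.GradedSMul 𝒜 ℰ] [DirectSum.Decomposition ℰ]
    (hIE : I • (⊤ : Submodule B E) = ⊤) :
    ∀ s : Finset E, (∀ x ∈ s, ∃ d, x ∈ ℰ d) →
      Submodule.span B (s : Set E) = ⊤ → ∀ x : E, x = 0 := by
  classical
  intro s
  induction s using Finset.strongInduction with
  | _ s ih =>
    intro hhom hspan x
    rcases Finset.eq_empty_or_nonempty s with rfl | ⟨e, he⟩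
    · have hx : x ∈ Submodule.span B ((∅ : Finset E) : Set E) := hspan ▸ Submodule.mem_top
      simpa using hx
    · -- choose degrees for elements of s
      have hdeg' : ∀ i : {y // y ∈ s}, ∃ d, (i : E) ∈ ℰ d := fun i => hhom i i.2
      set deg : {y // y ∈ s} → M := fun i => Classical.choose (hdeg' i) with hdegdef
      have hdeg : ∀ i : {y // y ∈ s}, (i : E) ∈ ℰ (deg i) :=
        fun i => Classical.choose_spec (hdeg' i)
      set i₀ : {y // y ∈ s} := ⟨e, he⟩ with hi₀def
      have hm : e ∈ ℰ (deg i₀) := hdeg i₀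
      -- e ∈ I • span s
      have h1 : e ∈ I • Submodule.span B (Set.range ((↑) : {y // y ∈ s} → E)) := by
        have hr : Set.range ((↑) : {y // y ∈ s} → E) = (s : Set E) := by
          ext y; simp
        rw [hr, hspan, hIE]
        exact Submodule.mem_top
      obtain ⟨a, ha, hsum⟩ := (Submodule.mem_ideal_smul_span_iff_exists_sum I _ e).1 h1
      -- project to degree m
      set g : {y // y ∈ s} → E :=
        fun i => (DirectSum.decompose 𝒜 (a i) (deg i₀ - deg i) : B) • (i : E) with hgdef
      have h2 : e = ∑ i ∈ a.support, g i := by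
        conv_lhs => rw [← DirectSum.decompose_of_mem_same ℰ hm, ← hsum, Finsupp.sum,
          DirectSum.decompose_sum]
        rw [DFinsupp.finset_sum_apply, AddSubmonoidClass.coe_finset_sum]
        exact Finset.sum_congr rfl fun i _ => gn_decompose_smul 𝒜 ℰ (a i) (hdeg i) (deg i₀)
      set t : Finset {y // y ∈ s} := insert i₀ a.support with htdef
      have h2' : e = ∑ i ∈ t, g i := by
        rw [h2]
        refine Finset.sum_subset (Finset.subset_insert _ _) (fun i _ hni => ?_)
        have : a i = 0 := Finsupp.notMem_support_iff.1 hni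
        simp [hgdef, this]
      have hsplit : g i₀ + ∑ i ∈ t.erase i₀, g i = ∑ i ∈ t, g i :=
        Finset.add_sum_erase t g (Finset.mem_insert_self _ _)
      -- the coefficient c of e
      set c : B := (DirectSum.decompose 𝒜 (a i₀) 0 : B) with hcdef
      have hgi₀ : g i₀ = c • e := by
        rw [hgdef]
        show (DirectSum.decompose 𝒜 (a i₀) (deg i₀ - deg i₀) : B) • (i₀ : E) = c • e
        rw [sub_self]
      have h3 : e - c • e ∈ Submodule.span B ((s.erase e : Finset E) : Set E) := by
        have hx1 : c • e + ∑ i ∈ t.erase i₀, g i = e := by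
          rw [← hgi₀]; exact hsplit.trans h2'.symm
        have hx2 : e - c • e = ∑ i ∈ t.erase i₀, g i := (eq_sub_of_add_eq' hx1).symm
        rw [hx2]
        refine Submodule.sum_mem _ fun i hi => ?_
        refine Submodule.smul_mem _ _ (Submodule.subset_span ?_)
        have hine : i ≠ i₀ := (Finset.mem_erase.1 hi).1
        have : (i : E) ≠ e := fun hc => hine (Subtype.ext hc)
        exact Finset.mem_coe.2 (Finset.mem_erase.2 ⟨this, i.2⟩)
      -- c lies in degree 0 and in I
      have hc0mem : c ∈ 𝒜 0 := (DirectSum.decompose 𝒜 (a i₀) 0).2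
      have hcI : c ∈ I := hI 0 (ha i₀)
      set c0 : (𝒜 0) := ⟨c, hc0mem⟩
      have hc0 : c0 ∈ Ideal.comap ((SetLike.GradeZero.subring 𝒜).subtype : (𝒜 0) →+* B) I :=
        hcI
      have hunit : IsUnit ((1 : (𝒜 0)) - c0) := by
        have := Ideal.mem_jacobson_bot.1 (hI0 hc0) (-1)
        have heq : c0 * (-1) + 1 = 1 - c0 := by ring
        rw [← heq]; exact this
      obtain ⟨u, hu⟩ := hunit
      have h5 : ((u⁻¹ : (𝒜 0)ˣ) : (𝒜 0)) * (1 - c0) = 1 := by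
        rw [← hu, Units.inv_mul]
      have h6 : (((u⁻¹ : (𝒜 0)ˣ) : (𝒜 0)) : B) * (1 - c) = 1 := by
        have := congrArg ((SetLike.GradeZero.subring 𝒜).subtype) h5
        simpa [map_mul, map_sub, map_one] using this
      -- conclude e is in the span of s.erase e
      have h7 : e ∈ Submodule.span B ((s.erase e : Finset E) : Set E) := by
        have hmem : ((((u⁻¹ : (𝒜 0)ˣ) : (𝒜 0)) : B)) • ((1 - c) • e) ∈
            Submodule.span B ((s.erase e : Finset E) : Set E) :=
          Submodule.smul_mem _ _ (by rwa [sub_smul, one_smul])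
        rwa [← mul_smul, h6, one_smul] at hmem
      have h8 : Submodule.span B ((s.erase e : Finset E) : Set E) = ⊤ := by
        rw [eq_top_iff, ← hspan]
        refine Submodule.span_le.2 fun y hy => ?_
        by_cases hye : y = e
        · subst hye; exact h7
        · exact Submodule.subset_span
            (Finset.mem_coe.2 (Finset.mem_erase.2 ⟨hye, Finset.mem_coe.1 hy⟩))
      exact ih (s.erase e) (Finset.erase_ssubset he)
        (fun y hy => hhom y (Finset.mem_of_mem_erase hy)) h8 x

/-- Graded Nakayama: let `B` be a commutative ring graded by an abelian group `M`,
and let `I ⊆ B` be a homogeneous ideal such that `I₀ = I ∩ B₀` is contained in the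
Jacobson radical of the subring `B₀ = 𝒜 0`. If `E` is a finitely generated `M`-graded
`B`-module with `I • E = E` (equivalently `E ⊗_B B/I = 0`), then `E = 0`. -/
theorem graded_nakayama
    {M : Type*} [AddCommGroup M] [DecidableEq M]
    {B : Type*} [CommRing B] (𝒜 : M → AddSubgroup B) [GradedRing 𝒜]
    (I : Ideal B) (hI : Ideal.IsHomogeneous 𝒜 I)
    (hI0 : Ideal.comap ((SetLike.GradeZero.subring 𝒜).subtype : (𝒜 0) →+* B) I ≤
      Ideal.jacobson (⊥ : Ideal (𝒜 0)))
    {E : Type*} [AddCommGroup E] [Module B E]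
    (ℰ : M → AddSubgroup E) [SetLike.GradedSMul 𝒜 ℰ] [DirectSum.Decomposition ℰ]
    [Module.Finite B E]
    (hIE : I • (⊤ : Submodule B E) = ⊤) :
    Subsingleton E := by
  classical
  obtain ⟨t, ht⟩ := Module.Finite.fg_top (R := B) (M := E)
  set s : Finset E := t.biUnion
    (fun x => (DirectSum.decompose ℰ x).support.image
      (fun mm => (DirectSum.decompose ℰ x mm : E))) with hsdef
  have hhom : ∀ y ∈ s, ∃ d, y ∈ ℰ d := by
    intro y hy
    obtain ⟨x, -, hy⟩ := Finset.mem_biUnion.1 hy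
    obtain ⟨mm, -, rfl⟩ := Finset.mem_image.1 hy
    exact ⟨mm, (DirectSum.decompose ℰ x mm).2⟩
  have hspan : Submodule.span B (s : Set E) = ⊤ := by
    rw [eq_top_iff, ← ht]
    refine Submodule.span_le.2 fun x hx => ?_
    have : x = ∑ mm ∈ (DirectSum.decompose ℰ x).support, (DirectSum.decompose ℰ x mm : E) :=
      (DirectSum.sum_support_decompose ℰ x).symm
    rw [this]
    refine Submodule.sum_mem _ fun mm hmm => Submodule.subset_span ?_
    exact Finset.mem_coe.2 (Finset.mem_biUnion.2 ⟨x, Finset.mem_coe.1 hx,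
      Finset.mem_image.2 ⟨mm, hmm, rfl⟩⟩)
  exact subsingleton_of_forall_eq 0 (gn_aux 𝒜 I hI hI0 ℰ hIE s hhom hspan)
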